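/- For every digraph D, degreewidth(D) ≤ Δ_min(D), where Δ_min(D) = max over vertices v of min(d⁺(v), d⁻(v)). -/

import Mathlib

open scoped Classical

variable {V : Type*}

/-- The backedge graph of a digraph (arc relation `A`) w.r.t. an ordering `σ`. -/
def backedge (A : V → V → Prop) (σ : V → ℕ) : SimpleGraph V where
  Adj u v := (A u v ∧ σ v < σ u) ∨ (A v u ∧ σ u < σ v)
  symm := ⟨fun u v h => h.symm⟩
  loopless := ⟨fun v h => by rcases h with ⟨_, h⟩ | ⟨_, h⟩ <;> exact lt_irrefl _ h⟩

/-- The maximum degree of a simple graph on a finite vertex type. -/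
noncomputable def maxDeg [Fintype V] (G : SimpleGraph V) : ℕ :=
  Finset.univ.sup fun v => (G.neighborSet v).ncard

/-- The degreewidth of a digraph: minimum over (total) orderings of the
maximum degree of the backedge graph. -/
noncomputable def degreewidth [Fintype V] (A : V → V → Prop) : ℕ :=
  sInf {k | ∃ σ : V → ℕ, Function.Injective σ ∧ maxDeg (backedge A σ) = k}

/-- The undirected graph `D[F]` on `V` whose edges correspond to arcs of `F`. -/
def graphOf (F : V → V → Prop) : SimpleGraph V where
  Adj u v := u ≠ v ∧ (F u v ∨ F v u)
  symm := ⟨fun u v h => ⟨h.1.symm, h.2.symm⟩⟩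
  loopless := ⟨fun v h => h.1 rfl⟩

/-- A digraph is acyclic: no vertex lies on a directed cycle. -/
def DigraphAcyclic (A : V → V → Prop) : Prop := ∀ v, ¬ Relation.TransGen A v v

/-- `F` is a feedback arc set of the digraph `A`. -/
def IsFAS (A F : V → V → Prop) : Prop :=
  (∀ u v, F u v → A u v) ∧ DigraphAcyclic (fun u v => A u v ∧ ¬ F u v)

section Aux

open Finset

variable [Fintype V]

/-- number of back-arcs -/
private noncomputable def Bc (A : V → V → Prop) (σ : V → ℕ) : ℕ :=
  (univ.filter (fun p : V × V => A p.1 p.2 ∧ σ p.2 < σ p.1)).card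

private noncomputable def outB (A : V → V → Prop) (σ : V → ℕ) (v : V) : ℕ :=
  (univ.filter (fun u => A v u ∧ σ u < σ v)).card

private noncomputable def inB (A : V → V → Prop) (σ : V → ℕ) (v : V) : ℕ :=
  (univ.filter (fun u => A u v ∧ σ v < σ u)).card

private noncomputable def offB (A : V → V → Prop) (σ : V → ℕ) (v : V) : ℕ :=
  (univ.filter (fun p : V × V => p.1 ≠ v ∧ p.2 ≠ v ∧ A p.1 p.2 ∧ σ p.2 < σ p.1)).card

private lemma Bc_decomp (A : V → V → Prop) (hA : Irreflexive A) (σ : V → ℕ) (v : V) :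
    Bc A σ = offB A σ v + outB A σ v + inB A σ v := by
  classical
  have h1 : (univ.filter (fun p : V × V => A p.1 p.2 ∧ σ p.2 < σ p.1))
      = (univ.filter (fun p : V × V => p.1 ≠ v ∧ p.2 ≠ v ∧ A p.1 p.2 ∧ σ p.2 < σ p.1))
        ∪ ((univ.filter (fun u => A v u ∧ σ u < σ v)).image (fun u => (v, u)))
        ∪ ((univ.filter (fun u => A u v ∧ σ v < σ u)).image (fun u => (u, v))) := by
    ext p
    simp only [mem_filter, mem_union, mem_image, mem_univ, true_and]
    constructor
    · rintro ⟨hA1, h2⟩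
      by_cases h1v : p.1 = v
      · exact Or.inl (Or.inr ⟨p.2, ⟨h1v ▸ hA1, h1v ▸ h2⟩, by simp [h1v.symm]⟩)
      · by_cases h2v : p.2 = v
        · exact Or.inr ⟨p.1, ⟨h2v ▸ hA1, h2v ▸ h2⟩, by simp [h2v.symm]⟩
        · exact Or.inl (Or.inl ⟨h1v, h2v, hA1, h2⟩)
    · rintro ((⟨_, _, h3, h4⟩ | ⟨u, ⟨h1, h2⟩, rfl⟩) | ⟨u, ⟨h1, h2⟩, rfl⟩) <;>
        exact ⟨by assumption, by assumption⟩
  have hinj1 : Function.Injective (fun u : V => ((v, u) : V × V)) := by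
    intro a b h; simpa using h
  have hinj2 : Function.Injective (fun u : V => ((u, v) : V × V)) := by
    intro a b h; simpa using h
  have hd1 : Disjoint
      ((univ.filter (fun p : V × V => p.1 ≠ v ∧ p.2 ≠ v ∧ A p.1 p.2 ∧ σ p.2 < σ p.1))
        ∪ ((univ.filter (fun u => A v u ∧ σ u < σ v)).image (fun u => (v, u))))
      ((univ.filter (fun u => A u v ∧ σ v < σ u)).image (fun u => (u, v))) := by
    rw [Finset.disjoint_left]
    rintro p hp hq
    simp only [mem_union, mem_filter, mem_image, mem_univ, true_and] at hp hq
    obtain ⟨u, ⟨hu1, hu2⟩, rfl⟩ := hq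
    rcases hp with ⟨_, h2, _⟩ | ⟨w, ⟨hw1, hw2⟩, hw⟩
    · exact h2 rfl
    · rw [Prod.mk.injEq] at hw
      obtain ⟨rfl, rfl⟩ := hw
      exact absurd hw1 (hA _)
  have hd2 : Disjoint
      (univ.filter (fun p : V × V => p.1 ≠ v ∧ p.2 ≠ v ∧ A p.1 p.2 ∧ σ p.2 < σ p.1))
      ((univ.filter (fun u => A v u ∧ σ u < σ v)).image (fun u => (v, u))) := by
    rw [Finset.disjoint_left]
    rintro p hp hq
    simp only [mem_filter, mem_image, mem_univ, true_and] at hp hq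
    obtain ⟨u, _, rfl⟩ := hq
    exact hp.1 rfl
  rw [Bc, h1, card_union_of_disjoint hd1, card_union_of_disjoint hd2,
    card_image_of_injective _ hinj1, card_image_of_injective _ hinj2]
  rfl

private lemma deg_eq (A : V → V → Prop) (σ : V → ℕ) (v : V) :
    ((backedge A σ).neighborSet v).ncard = outB A σ v + inB A σ v := by
  classical
  have hset : (backedge A σ).neighborSet v
      = ↑((univ.filter (fun u => A v u ∧ σ u < σ v))
          ∪ (univ.filter (fun u => A u v ∧ σ v < σ u))) := by
    ext u
    simp [backedge, SimpleGraph.neighborSet]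
  have hdisj : Disjoint (univ.filter (fun u => A v u ∧ σ u < σ v))
      (univ.filter (fun u => A u v ∧ σ v < σ u)) := by
    rw [Finset.disjoint_left]
    intro u hu hu'
    simp only [mem_filter, mem_univ, true_and] at hu hu'
    exact absurd (hu.2.trans hu'.2) (lt_irrefl _)
  rw [hset, Set.ncard_coe_finset, card_union_of_disjoint hdisj]
  rfl

private lemma ncard_out (A : V → V → Prop) (v : V) :
    {w | A v w}.ncard = (univ.filter (fun u => A v u)).card := by
  classical
  rw [← Set.ncard_coe_finset]
  congr 1
  ext u; simp

private lemma ncard_in (A : V → V → Prop) (v : V) :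
    {w | A w v}.ncard = (univ.filter (fun u => A u v)).card := by
  classical
  rw [← Set.ncard_coe_finset]
  congr 1
  ext u; simp

end Aux

/-- `degreewidth(D) ≤ Δ_min(D) = max over v of min(d⁺(v), d⁻(v))`. -/
theorem degreewidth_le_DeltaMin [Fintype V] (A : V → V → Prop) (hA : Irreflexive A) :
    degreewidth A ≤
      Finset.univ.sup (fun v => min ({w | A v w}.ncard) ({w | A w v}.ncard)) := by
  classical
  -- a minimizing ordering
  set T : Set ℕ := {n | ∃ σ : V → ℕ, Function.Injective σ ∧ Bc A σ = n} with hT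
  have hTne : T.Nonempty :=
    ⟨_, fun v => ((Fintype.equivFin V) v : ℕ),
      fun a b h => (Fintype.equivFin V).injective (Fin.ext h), rfl⟩
  obtain ⟨σ, hσ, hmin⟩ := Nat.sInf_mem hTne
  have key : ∀ τ : V → ℕ, Function.Injective τ → Bc A σ ≤ Bc A τ := by
    intro τ hτ
    rw [hmin]
    exact Nat.sInf_le ⟨τ, hτ, rfl⟩
  -- degree bound at each vertex
  have degbound : ∀ v : V, outB A σ v + inB A σ v ≤
      min ({w | A v w}.ncard) ({w | A w v}.ncard) := by
    intro v
    refine le_min ?_ ?_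
    · -- move v to the end
      set N : ℕ := (Finset.univ.sup σ) + 1 with hN
      set τ : V → ℕ := fun u => if u = v then N else σ u with hτdef
      have hlt : ∀ u : V, u ≠ v → τ u < N := by
        intro u hu
        simp only [hτdef, if_neg hu]
        exact Nat.lt_succ_of_le (Finset.le_sup (Finset.mem_univ u))
      have hτv : τ v = N := by simp [hτdef]
      have hτinj : Function.Injective τ := by
        intro a b h
        by_cases ha : a = v <;> by_cases hb : b = v
        · rw [ha, hb]
        · subst ha; rw [hτv] at h; exact absurd h.symm (Nat.ne_of_lt (hlt b hb))
        · subst hb; rw [hτv] at h; exact absurd h (Nat.ne_of_lt (hlt a ha))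
        · exact hσ (by simpa [hτdef, if_neg ha, if_neg hb] using h)
      have hoff : offB A τ v = offB A σ v := by
        unfold offB
        congr 1
        apply Finset.filter_congr
        intro p _
        by_cases h1 : p.1 = v <;> by_cases h2 : p.2 = v <;>
          simp [hτdef, h1, h2]
      have hout : outB A τ v = (Finset.univ.filter (fun u => A v u)).card := by
        unfold outB
        congr 1
        apply Finset.filter_congr
        intro u _
        by_cases hu : u = v
        · subst hu; simp [hA u]
        · simp [hτv, hlt u hu]
      have hin : inB A τ v = 0 := by
        unfold inB
        rw [Finset.card_eq_zero, Finset.filter_eq_empty_iff]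
        intro u _
        by_cases hu : u = v
        · subst hu; simp [hA u]
        · simp only [hτv, not_and, not_lt]
          intro _
          exact le_of_lt (hlt u hu)
      have := key τ hτinj
      rw [Bc_decomp A hA σ v, Bc_decomp A hA τ v, hoff, hout, hin, ncard_out] at *
      omega
    · -- move v to the front
      set τ : V → ℕ := fun u => if u = v then 0 else σ u + 1 with hτdef
      have hτv : τ v = 0 := by simp [hτdef]
      have hpos : ∀ u : V, u ≠ v → 0 < τ u := by
        intro u hu; simp [hτdef, if_neg hu]
      have hτinj : Function.Injective τ := by
        intro a b h
        by_cases ha : a = v <;> by_cases hb : b = v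
        · rw [ha, hb]
        · subst ha; rw [hτv] at h; exact absurd h.symm (ne_of_gt (hpos b hb))
        · subst hb; rw [hτv] at h; exact absurd h (ne_of_gt (hpos a ha))
        · exact hσ (by simpa [hτdef, if_neg ha, if_neg hb] using h)
      have hoff : offB A τ v = offB A σ v := by
        unfold offB
        congr 1
        apply Finset.filter_congr
        intro p _
        by_cases h1 : p.1 = v <;> by_cases h2 : p.2 = v <;>
          simp [hτdef, h1, h2]
      have hout : outB A τ v = 0 := by
        unfold outB
        rw [Finset.card_eq_zero, Finset.filter_eq_empty_iff]
        intro u _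
        simp [hτv]
      have hin : inB A τ v = (Finset.univ.filter (fun u => A u v)).card := by
        unfold inB
        congr 1
        apply Finset.filter_congr
        intro u _
        by_cases hu : u = v
        · subst hu; simp [hA u]
        · simp [hτv, hpos u hu, hτdef, if_neg hu]
      have := key τ hτinj
      rw [Bc_decomp A hA σ v, Bc_decomp A hA τ v, hoff, hout, hin, ncard_in] at *
      omega
  -- conclude
  have h1 : degreewidth A ≤ maxDeg (backedge A σ) := Nat.sInf_le ⟨σ, hσ, rfl⟩
  refine h1.trans ?_
  apply Finset.sup_le
  intro v _
  rw [deg_eq A σ v]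
  exact le_trans (degbound v)
    (Finset.le_sup (f := fun v => min ({w | A v w}.ncard) ({w | A w v}.ncard))
      (Finset.mem_univ v))
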